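/- arXiv:1906.06552 — 3 statements merged into one kernel-verified Lean document; each statement's English description precedes it below -/
import Mathlib

section
/- Suppose {v_n}_{n≥0} is a Riesz basis of a separable real Hilbert space H and {ṽ_n}_{n≥0} is a sequence in H with Σ_{n≥0} ‖v_n − ṽ_n‖² < ε for sufficiently small ε > 0 (depending on the basis constants of {v_n}) and {ṽ_n} is complete in H. Then {ṽ_n}_{n≥0} is also a Riesz basis of H. -/
open Real MeasureTheory

/-- A Riesz basis of a Hilbert space: the image of an orthonormal (Hilbert) basis
under a bounded invertible linear operator. -/
def IsRieszBasis {H : Type*} [NormedAddCommGroup H] [InnerProductSpace ℝ H]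
    (v : ℕ → H) : Prop :=
  ∃ (e : HilbertBasis ℕ ℝ H) (T : H ≃L[ℝ] H), ∀ n, v n = T (e n)

theorem riesz_basis_stability {H : Type*} [NormedAddCommGroup H] [InnerProductSpace ℝ H]
    [CompleteSpace H] [TopologicalSpace.SeparableSpace H] (v : ℕ → H) (hv : IsRieszBasis v) :
    ∃ ε > (0:ℝ), ∀ w : ℕ → H,
      Summable (fun n : ℕ => ‖v n - w n‖^2) →
      (∑' n : ℕ, ‖v n - w n‖^2) < ε →
      (Submodule.span ℝ (Set.range w)).topologicalClosure = ⊤ →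
      IsRieszBasis w := by
  obtain ⟨e, T, hvT⟩ := hv
  set M : ℝ := ‖(T.symm : H →L[ℝ] H)‖ with hM
  have hM0 : 0 ≤ M := norm_nonneg _
  have h1M : (0:ℝ) < 1 + M := by linarith
  refine ⟨((1 + M)⁻¹)^2, by positivity, fun w hsum hlt _ => ?_⟩
  set d : ℕ → H := fun n => v n - w n with hd
  -- the quadratic sum bound
  have hB0 : 0 ≤ ∑' n, ‖d n‖^2 := tsum_nonneg (fun n => by positivity)
  set B : ℝ := Real.sqrt (∑' n, ‖d n‖^2) with hBdef
  have hB : B < (1 + M)⁻¹ := by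
    have := Real.sqrt_lt_sqrt hB0 hlt
    rwa [Real.sqrt_sq (by positivity)] at this
  have hBnn : 0 ≤ B := Real.sqrt_nonneg _
  -- coefficients
  set c : H → ℕ → ℝ := fun x n => inner ℝ (e n) x with hc
  have hcsum : ∀ x : H, Summable (fun n => ‖c x n‖^2) :=
    fun x => e.orthonormal.inner_products_summable x
  have hcle : ∀ x : H, ∑' n, ‖c x n‖^2 ≤ ‖x‖^2 :=
    fun x => e.orthonormal.tsum_inner_products_le x
  -- summability of the defining series
  have habs : ∀ x : H, Summable (fun n => ‖c x n • d n‖) := by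
    intro x
    have h1 : Summable (fun n => (‖c x n‖^2 + ‖d n‖^2) / 2) :=
      ((hcsum x).add hsum).div_const 2
    refine h1.of_nonneg_of_le (fun n => norm_nonneg _) (fun n => ?_)
    rw [norm_smul]
    nlinarith [sq_nonneg (‖c x n‖ - ‖d n‖), norm_nonneg (c x n), norm_nonneg (d n)]
  have hsummable : ∀ x : H, Summable (fun n => c x n • d n) :=
    fun x => (habs x).of_norm
  -- Cauchy–Schwarz bound on the series of norms
  have hkey : ∀ x : H, (∑' n, ‖c x n • d n‖) ≤ ‖x‖ * B := by
    intro x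
    refine Summable.tsum_le_of_sum_le (habs x) (fun s => ?_)
    have hCS : (∑ n ∈ s, ‖c x n‖ * ‖d n‖)^2 ≤
        (∑ n ∈ s, ‖c x n‖^2) * (∑ n ∈ s, ‖d n‖^2) := by
      simpa [mul_pow] using Finset.sum_mul_sq_le_sq_mul_sq s (fun n => ‖c x n‖) (fun n => ‖d n‖)
    have hc2 : (∑ n ∈ s, ‖c x n‖^2) ≤ ‖x‖^2 :=
      le_trans (Summable.sum_le_tsum s (fun n _ => by positivity) (hcsum x)) (hcle x)
    have hd2 : (∑ n ∈ s, ‖d n‖^2) ≤ B^2 := by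
      rw [hBdef, Real.sq_sqrt hB0]
      exact Summable.sum_le_tsum s (fun n _ => by positivity) hsum
    have hnn : 0 ≤ ∑ n ∈ s, ‖c x n‖ * ‖d n‖ :=
      Finset.sum_nonneg (fun n _ => mul_nonneg (norm_nonneg _) (norm_nonneg _))
    have : (∑ n ∈ s, ‖c x n‖ * ‖d n‖)^2 ≤ (‖x‖ * B)^2 := by
      calc (∑ n ∈ s, ‖c x n‖ * ‖d n‖)^2 ≤ (∑ n ∈ s, ‖c x n‖^2) * (∑ n ∈ s, ‖d n‖^2) := hCS
        _ ≤ ‖x‖^2 * B^2 := by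
            apply mul_le_mul hc2 hd2 (Finset.sum_nonneg (fun n _ => by positivity)) (by positivity)
        _ = (‖x‖ * B)^2 := by ring
    calc ∑ n ∈ s, ‖c x n • d n‖ = ∑ n ∈ s, ‖c x n‖ * ‖d n‖ := by
          simp [norm_smul]
      _ ≤ ‖x‖ * B := by nlinarith [mul_nonneg (norm_nonneg x) hBnn]
  -- the perturbation operator
  set Sfun : H → H := fun x => ∑' n, c x n • d n with hSfun
  have hSadd : ∀ x y, Sfun (x + y) = Sfun x + Sfun y := by
    intro x y
    have : (fun n => c (x + y) n • d n) = fun n => c x n • d n + c y n • d n := by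
      funext n
      simp [hc, inner_add_right, add_smul]
    rw [hSfun]
    simp only [this]
    exact Summable.tsum_add (hsummable x) (hsummable y)
  have hSsmul : ∀ (r : ℝ) x, Sfun (r • x) = r • Sfun x := by
    intro r x
    have : (fun n => c (r • x) n • d n) = fun n => r • (c x n • d n) := by
      funext n
      simp [hc, inner_smul_right, smul_smul]
    rw [hSfun]
    simp only [this]
    exact Summable.tsum_const_smul r (hsummable x)
  have hSbound : ∀ x, ‖Sfun x‖ ≤ B * ‖x‖ := by
    intro x
    calc ‖Sfun x‖ ≤ ∑' n, ‖c x n • d n‖ := norm_tsum_le_tsum_norm (habs x)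
      _ ≤ ‖x‖ * B := hkey x
      _ = B * ‖x‖ := mul_comm _ _
  set S : H →L[ℝ] H :=
    LinearMap.mkContinuous
      { toFun := Sfun, map_add' := hSadd, map_smul' := hSsmul } B hSbound with hS
  have hSnorm : ‖S‖ ≤ B :=
    LinearMap.mkContinuous_norm_le _ hBnn hSbound
  -- T⁻¹ ∘ S has norm < 1
  set A : H →L[ℝ] H := (T.symm : H →L[ℝ] H).comp S with hA
  have hAnorm : ‖A‖ < 1 := by
    have h1 : ‖A‖ ≤ M * B := le_trans (ContinuousLinearMap.opNorm_comp_le _ _)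
      (by exact mul_le_mul_of_nonneg_left hSnorm hM0)
    have h2 : M * B ≤ M * (1 + M)⁻¹ := mul_le_mul_of_nonneg_left hB.le hM0
    have h4 : 0 < (1 + M)⁻¹ := inv_pos.mpr h1M
    have h3 : M * (1 + M)⁻¹ + (1+M)⁻¹ = 1 := by
      field_simp
      ring
    linarith
  -- invert 1 - A
  set u : (H →L[ℝ] H)ˣ := Units.oneSub A hAnorm with hu
  set E₀ : H ≃L[ℝ] H := ContinuousLinearEquiv.unitsEquiv ℝ H u with hE₀
  refine ⟨e, E₀.trans T, fun n => ?_⟩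
  -- compute S (e n) = d n
  have hSe : Sfun (e n) = d n := by
    have heq : Sfun (e n) = ∑' m, c (e n) m • d m := rfl
    rw [heq]
    have : ∀ m : ℕ, m ≠ n → c (e n) m • d m = 0 := by
      intro m hm
      have := orthonormal_iff_ite.mp e.orthonormal m n
      simp [hc, this, hm]
    rw [tsum_eq_single n this]
    have := orthonormal_iff_ite.mp e.orthonormal n n
    simp [hc, this, e.orthonormal.1 n]
  have hE₀e : E₀ (e n) = e n - A (e n) := by
    rw [hE₀]
    simp [ContinuousLinearEquiv.unitsEquiv_apply, hu, Units.val_oneSub,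
      ContinuousLinearMap.sub_apply]
  have hTA : T (A (e n)) = d n := by
    rw [hA]
    simp only [ContinuousLinearMap.comp_apply]
    have : S (e n) = d n := hSe
    rw [this]
    simp
  show w n = (E₀.trans T) (e n)
  have : (E₀.trans T) (e n) = T (e n) - T (A (e n)) := by
    simp [ContinuousLinearEquiv.trans_apply, hE₀e, map_sub]
  rw [this, hTA, ← hvT n]
  have hdn : d n = v n - w n := rfl
  rw [hdn]
  abel
end

section
/- The functions sin((2k+1)πx), k ≥ 0, form a complete orthogonal system in L²(0, 1/2): they are pairwise orthogonal, each has norm 1/2, and if f ∈ L²(0,1/2) satisfies ∫₀^{1/2} f(x) sin((2k+1)πx) dx = 0 for all k ≥ 0, then f = 0 almost everywhere. -/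
open MeasureTheory Real intervalIntegral

lemma cos_int_integral (m : ℤ) (hm : m ≠ 0) :
    ∫ x in (0:ℝ)..(1/2), Real.cos (2 * m * π * x) = 0 := by
  have h2 : (2 * (m:ℝ) * π) ≠ 0 := by simp [Real.pi_ne_zero, hm]
  have key := intervalIntegral.integral_comp_mul_left (a := (0:ℝ)) (b := 1/2)
    (f := fun x => Real.cos x) h2
  simp only [integral_cos] at key
  calc ∫ x in (0:ℝ)..(1/2), Real.cos (2 * m * π * x) = _ := key
  _ = 0 := by
    rw [mul_zero, Real.sin_zero]
    have : 2 * (m:ℝ) * π * (1/2) = m * π := by ring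
    rw [this, Real.sin_int_mul_pi]; simp

lemma ioo_eq_interval (F : ℝ → ℝ) :
    ∫ x in Set.Ioo (0:ℝ) (1/2), F x = ∫ x in (0:ℝ)..(1/2), F x := by
  rw [intervalIntegral.integral_of_le (by norm_num), MeasureTheory.integral_Ioc_eq_integral_Ioo]

lemma part1 (j k : ℕ) (hjk : j ≠ k) :
    ∫ x in Set.Ioo (0:ℝ) (1/2),
      Real.sin ((2 * j + 1) * π * x) * Real.sin ((2 * k + 1) * π * x) = 0 := by
  rw [ioo_eq_interval]
  have hid : ∀ x : ℝ, Real.sin ((2 * j + 1) * π * x) * Real.sin ((2 * k + 1) * π * x)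
      = (1/2) * Real.cos (2 * (((j:ℤ) - k : ℤ):ℝ) * π * x)
        - (1/2) * Real.cos (2 * (((j:ℤ) + k + 1 : ℤ):ℝ) * π * x) := by
    intro x
    have e1 : 2 * ((j:ℝ) - k) * π * x = (2*j+1)*π*x - (2*k+1)*π*x := by ring
    have e2 : 2 * ((j:ℝ) + k + 1) * π * x = (2*j+1)*π*x + (2*k+1)*π*x := by ring
    push_cast
    rw [e1, e2, Real.cos_sub, Real.cos_add]
    ring
  simp only [hid]
  rw [intervalIntegral.integral_sub
      ((by fun_prop : Continuous fun x => (1/2 : ℝ) * Real.cos (2 * (((j:ℤ) - k : ℤ):ℝ) * π * x)).intervalIntegrable _ _)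
      ((by fun_prop : Continuous fun x => (1/2:ℝ) * Real.cos (2 * (((j:ℤ) + k + 1 : ℤ):ℝ) * π * x)).intervalIntegrable _ _),
    intervalIntegral.integral_const_mul, intervalIntegral.integral_const_mul,
    cos_int_integral _ (sub_ne_zero.2 (fun h => hjk (by exact_mod_cast h))),
    cos_int_integral _ (by positivity)]
  ring

lemma part2 (k : ℕ) :
    (∫ x in Set.Ioo (0:ℝ) (1/2), Real.sin ((2 * k + 1) * π * x) ^ 2) = (1/2 : ℝ)^2 := by
  rw [ioo_eq_interval]
  have hid : ∀ x : ℝ, Real.sin ((2 * k + 1) * π * x) ^ 2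
      = (1/2) - (1/2) * Real.cos (2 * (((2*k + 1 : ℕ) : ℤ):ℝ) * π * x) := by
    intro x
    have e2 : 2 * ((2*(k:ℝ) + 1)) * π * x = 2 * ((2*k+1)*π*x) := by ring
    push_cast
    rw [e2, Real.cos_two_mul']
    have := Real.sin_sq_add_cos_sq ((2*(k:ℝ)+1)*π*x)
    linarith
  simp only [hid]
  rw [intervalIntegral.integral_sub (intervalIntegrable_const)
      ((by fun_prop : Continuous fun x => (1/2:ℝ) * Real.cos (2 * (((2*k+1 : ℕ) : ℤ):ℝ) * π * x)).intervalIntegrable _ _),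
    intervalIntegral.integral_const_mul, cos_int_integral _ (by positivity),
    intervalIntegral.integral_const]
  norm_num


section
variable (f : ℝ → ℝ)

noncomputable def mu : Measure ℝ := volume.restrict (Set.Ioo (0:ℝ) (1/2))

instance : IsFiniteMeasure (mu) := by
  unfold mu
  constructor
  rw [Measure.restrict_apply MeasurableSet.univ]
  simp

-- integrability of f * G for continuous G
lemma int_mul (hf : Integrable f mu) (G : ℝ → ℝ) (hG : Continuous G) :
    Integrable (fun x => f x * G x) mu := by
  obtain ⟨C, hC⟩ := (isCompact_Icc (a := (0:ℝ)) (b := 1/2)).exists_bound_of_continuousOn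
    hG.continuousOn
  have hb : ∀ᵐ x ∂(mu), ‖G x‖ ≤ C := by
    unfold mu
    filter_upwards [ae_restrict_mem measurableSet_Ioo] with x hx
    exact hC x (Set.mem_Icc_of_Ioo hx)
  have := Integrable.bdd_mul (μ := mu) hf hG.aestronglyMeasurable.restrict hb
  refine this.congr (Filter.Eventually.of_forall fun x => mul_comm _ _)
end

section
variable (f : ℝ → ℝ)

-- base over ℤ
lemma base_int (hf : Integrable f mu)
    (h0 : ∀ k : ℕ, ∫ x, f x * Real.sin ((2 * k + 1) * π * x) ∂mu = 0) :
    ∀ j : ℤ, ∫ x, f x * Real.sin ((2 * j + 1) * π * x) ∂mu = 0 := by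
  intro j
  rcases le_or_gt 0 j with hj | hj
  · lift j to ℕ using hj
    exact_mod_cast h0 j
  · have hk : (0:ℤ) ≤ -1 - j := by omega
    have := h0 (-1 - j).toNat
    have hcast : ((( -1 - j).toNat : ℝ)) = -1 - j := by
      exact_mod_cast Int.toNat_of_nonneg hk
    rw [hcast] at this
    have hptw : ∀ x : ℝ, f x * Real.sin ((2 * (j:ℝ) + 1) * π * x)
        = -(f x * Real.sin ((2 * (-1 - (j:ℝ)) + 1) * π * x)) := by
      intro x
      have : (2 * (-1 - (j:ℝ)) + 1) * π * x = -((2 * (j:ℝ) + 1) * π * x) := by ring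
      rw [this, Real.sin_neg]
      ring
    simp only [hptw]
    rw [MeasureTheory.integral_neg, this]
    simp

lemma step_n (hf : Integrable f mu)
    (h0 : ∀ k : ℕ, ∫ x, f x * Real.sin ((2 * k + 1) * π * x) ∂mu = 0) :
    ∀ n : ℕ, ∀ j : ℤ,
      ∫ x, f x * (Real.cos (2 * π * x)) ^ n * Real.sin ((2 * j + 1) * π * x) ∂mu = 0 := by
  intro n
  induction n with
  | zero => simpa using base_int f hf h0
  | succ n ih =>
    intro j
    have hint : ∀ m : ℤ, Integrable
        (fun x => f x * (Real.cos (2 * π * x)) ^ n * Real.sin ((2 * m + 1) * π * x)) mu := by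
      intro m
      have := int_mul f hf (fun x => (Real.cos (2 * π * x)) ^ n * Real.sin ((2 * m + 1) * π * x))
        (by fun_prop)
      exact this.congr (Filter.Eventually.of_forall fun x => by ring)
    have hptw : ∀ x : ℝ, f x * (Real.cos (2 * π * x)) ^ (n+1) * Real.sin ((2 * j + 1) * π * x)
        = (1/2) * (f x * (Real.cos (2 * π * x)) ^ n * Real.sin ((2 * (j+1:ℤ) + 1) * π * x))
          + (1/2) * (f x * (Real.cos (2 * π * x)) ^ n * Real.sin ((2 * (j-1:ℤ) + 1) * π * x)) := by
      intro x
      have e1 : (2 * ((j:ℝ)+1) + 1) * π * x = (2 * j + 1) * π * x + 2 * π * x := by ring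
      have e2 : (2 * ((j:ℝ)-1) + 1) * π * x = (2 * j + 1) * π * x - 2 * π * x := by ring
      push_cast
      rw [e1, e2, Real.sin_add, Real.sin_sub]
      ring
    simp only [hptw]
    rw [integral_add ((hint (j+1)).const_mul _) ((hint (j-1)).const_mul _),
      MeasureTheory.integral_const_mul, MeasureTheory.integral_const_mul, ih (j+1), ih (j-1)]
    ring
end

section
variable (f : ℝ → ℝ)

lemma step_poly (hf : Integrable f mu)
    (h0 : ∀ k : ℕ, ∫ x, f x * Real.sin ((2 * k + 1) * π * x) ∂mu = 0) (p : Polynomial ℝ) :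
    ∫ x, f x * Real.sin (π * x) * p.eval (Real.cos (2 * π * x)) ∂mu = 0 := by
  induction p using Polynomial.induction_on' with
  | monomial n a =>
    have key := step_n f hf h0 n 0
    have : ∀ x : ℝ, f x * Real.sin (π * x) * ((Polynomial.monomial n a).eval (Real.cos (2*π*x)))
        = a * (f x * (Real.cos (2 * π * x)) ^ n * Real.sin ((2 * (0:ℤ) + 1) * π * x)) := by
      intro x
      simp only [Polynomial.eval_monomial]
      push_cast
      ring_nf
    simp only [this]
    rw [MeasureTheory.integral_const_mul, key, mul_zero]
  | add p q hp hq =>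
    have hip : Integrable (fun x => f x * Real.sin (π*x) * p.eval (Real.cos (2*π*x))) mu := by
      have := int_mul f hf (fun x => Real.sin (π*x) * p.eval (Real.cos (2*π*x)))
        (by fun_prop)
      exact this.congr (Filter.Eventually.of_forall fun x => by ring)
    have hiq : Integrable (fun x => f x * Real.sin (π*x) * q.eval (Real.cos (2*π*x))) mu := by
      have := int_mul f hf (fun x => Real.sin (π*x) * q.eval (Real.cos (2*π*x)))
        (by fun_prop)
      exact this.congr (Filter.Eventually.of_forall fun x => by ring)
    have : ∀ x : ℝ, f x * Real.sin (π*x) * ((p+q).eval (Real.cos (2*π*x)))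
        = f x * Real.sin (π*x) * p.eval (Real.cos (2*π*x))
          + f x * Real.sin (π*x) * q.eval (Real.cos (2*π*x)) := by
      intro x; simp [Polynomial.eval_add]; ring
    simp only [this]
    rw [integral_add hip hiq, hp, hq, add_zero]
end

section
variable (f : ℝ → ℝ)

noncomputable def ccos : C(Set.Icc (0:ℝ) (1/2), ℝ) :=
  ⟨fun x => Real.cos (2 * π * (x:ℝ)), by fun_prop⟩

lemma ccos_sep : (Algebra.adjoin ℝ {ccos}).SeparatesPoints := by
  intro x y hxy
  refine ⟨_, ⟨ccos, Algebra.subset_adjoin rfl, rfl⟩, ?_⟩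
  simp only [ccos, ContinuousMap.coe_mk]
  intro h
  apply hxy
  have hx := x.2
  have hy := y.2
  simp only [Set.mem_Icc] at hx hy
  have hπ0 := Real.pi_pos
  have hmx : 2 * π * (x:ℝ) ∈ Set.Icc 0 π :=
    ⟨by nlinarith [hx.1], by nlinarith [hx.2]⟩
  have hmy : 2 * π * (y:ℝ) ∈ Set.Icc 0 π :=
    ⟨by nlinarith [hy.1], by nlinarith [hy.2]⟩
  have := Real.injOn_cos hmx hmy h
  ext
  have hπ := Real.pi_pos
  nlinarith [this]

lemma step_cont (hf : Integrable f mu)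
    (h0 : ∀ k : ℕ, ∫ x, f x * Real.sin ((2 * k + 1) * π * x) ∂mu = 0)
    (G : ℝ → ℝ) (hG : Continuous G) :
    ∫ x, f x * Real.sin (π * x) * G x ∂mu = 0 := by
  set I := ∫ x, f x * Real.sin (π * x) * G x ∂mu with hI
  set B := ∫ x, ‖f x * Real.sin (π * x)‖ ∂mu with hB
  have hBnn : 0 ≤ B := integral_nonneg fun x => norm_nonneg _
  have hfs : Integrable (fun x => f x * Real.sin (π * x)) mu :=
    int_mul f hf _ (by fun_prop)
  have key : ∀ ε : ℝ, 0 < ε → |I| < ε := by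
    intro ε hε
    set ε' := ε / (B + 1) with hε'
    have hε'pos : 0 < ε' := by positivity
    obtain ⟨g, hg⟩ := ContinuousMap.exists_mem_subalgebra_near_continuous_of_separatesPoints
      (Algebra.adjoin ℝ {ccos}) ccos_sep (fun x => G x) (hG.comp continuous_subtype_val) ε' hε'pos
    obtain ⟨p, hp⟩ : ∃ p : Polynomial ℝ, Polynomial.aeval ccos p = (g : C(_,ℝ)) := by
      have hmem : (g : C(Set.Icc (0:ℝ) (1/2), ℝ)) ∈ (Polynomial.aeval (R := ℝ) ccos).range := by
        rw [← Algebra.adjoin_singleton_eq_range_aeval]; exact g.2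
      exact hmem
    have happly : ∀ x (hx : x ∈ Set.Icc (0:ℝ) (1/2)),
        (g : C(Set.Icc (0:ℝ) (1/2), ℝ)) ⟨x, hx⟩ = p.eval (Real.cos (2 * π * x)) := by
      intro x hx
      rw [← hp, Polynomial.aeval_continuousMap_apply]
      rfl
    have hzero := step_poly f hf h0 p
    have hint1 : Integrable (fun x => f x * Real.sin (π*x) * p.eval (Real.cos (2*π*x))) mu := by
      have := int_mul f hf (fun x => Real.sin (π*x) * p.eval (Real.cos (2*π*x))) (by fun_prop)
      exact this.congr (Filter.Eventually.of_forall fun x => by ring)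
    have hint2 : Integrable (fun x => f x * Real.sin (π*x) * G x) mu := by
      have := int_mul f hf (fun x => Real.sin (π*x) * G x) (by fun_prop)
      exact this.congr (Filter.Eventually.of_forall fun x => by ring)
    have hdiff : I = ∫ x, (f x * Real.sin (π*x) * G x
        - f x * Real.sin (π*x) * p.eval (Real.cos (2*π*x))) ∂mu := by
      rw [integral_sub hint2 hint1, hzero, sub_zero]
    have hbound : |I| ≤ ε' * B := by
      rw [hdiff, ← Real.norm_eq_abs]
      calc ‖∫ x, (f x * Real.sin (π*x) * G x
            - f x * Real.sin (π*x) * p.eval (Real.cos (2*π*x))) ∂mu‖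
          ≤ ∫ x, ‖f x * Real.sin (π*x) * G x
            - f x * Real.sin (π*x) * p.eval (Real.cos (2*π*x))‖ ∂mu :=
            norm_integral_le_integral_norm _
        _ ≤ ∫ x, ‖f x * Real.sin (π*x)‖ * ε' ∂mu := by
            apply integral_mono_ae ((hint2.sub hint1).norm) (hfs.norm.mul_const ε')
            unfold mu
            filter_upwards [ae_restrict_mem measurableSet_Ioo] with x hx
            simp only [Pi.sub_apply]
            have hxI : x ∈ Set.Icc (0:ℝ) (1/2) := Set.mem_Icc_of_Ioo hx
            have : f x * Real.sin (π*x) * G x - f x * Real.sin (π*x) * p.eval (Real.cos (2*π*x))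
                = f x * Real.sin (π*x) * (G x - p.eval (Real.cos (2*π*x))) := by ring
            rw [this, norm_mul]
            apply mul_le_mul_of_nonneg_left _ (norm_nonneg _)
            have := hg ⟨x, hxI⟩
            rw [happly x hxI] at this
            have : ‖p.eval (Real.cos (2*π*x)) - G x‖ < ε' := this
            rw [show G x - p.eval (Real.cos (2*π*x)) = -(p.eval (Real.cos (2*π*x)) - G x) by ring,
              norm_neg]
            exact le_of_lt this
        _ = ε' * B := by rw [MeasureTheory.integral_mul_const]; ring
    calc |I| ≤ ε' * B := hbound
      _ < ε' * (B + 1) := by nlinarith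
      _ = ε := by rw [hε', div_mul_cancel₀]; positivity
  by_contra h
  exact absurd (key |I| (abs_pos.mpr (by simpa using h))) (lt_irrefl _)
end

section
variable (f : ℝ → ℝ)

lemma part3 (hf : MemLp f 2 (volume.restrict (Set.Ioo (0:ℝ) (1/2))))
    (h0 : ∀ k : ℕ, ∫ x in Set.Ioo (0:ℝ) (1/2), f x * Real.sin ((2 * k + 1) * π * x) = 0) :
    f =ᵐ[volume.restrict (Set.Ioo (0:ℝ) (1/2))] 0 := by
  have hfi : Integrable f mu := by
    have hf' : MemLp f 2 mu := hf
    exact hf'.integrable (by norm_num)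
  have h0' : ∀ k : ℕ, ∫ x, f x * Real.sin ((2 * k + 1) * π * x) ∂mu = 0 := h0
  have hfs : Integrable (fun x => f x * Real.sin (π * x)) mu :=
    int_mul f hfi _ (by fun_prop)
  have hzero : ∀ᵐ x ∂mu, f x * Real.sin (π * x) = 0 := by
    apply ae_eq_zero_of_integral_contDiff_smul_eq_zero (μ := mu)
      (hfs.locallyIntegrable)
    intro g hg hgsupp
    have := step_cont f hfi h0' g hg.continuous
    rw [← this]
    apply MeasureTheory.integral_congr_ae
    filter_upwards with x
    simp [smul_eq_mul]
    ring
  show f =ᵐ[mu] 0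
  have hmem : ∀ᵐ x ∂mu, x ∈ Set.Ioo (0:ℝ) (1/2) := ae_restrict_mem measurableSet_Ioo
  filter_upwards [hzero, hmem] with x hx hxm
  have hsin : Real.sin (π * x) > 0 := by
    apply Real.sin_pos_of_pos_of_lt_pi
    · have := Real.pi_pos; nlinarith [hxm.1]
    · have := Real.pi_pos; nlinarith [hxm.2, Real.pi_pos]
  have := mul_eq_zero.mp hx
  rcases this with h | h
  · exact h
  · exact absurd h (ne_of_gt hsin)
end


theorem sin_complete_orthogonal_system :
    (∀ j k : ℕ, j ≠ k →
      ∫ x in Set.Ioo (0:ℝ) (1/2),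
        Real.sin ((2 * j + 1) * Real.pi * x) * Real.sin ((2 * k + 1) * Real.pi * x) = 0) ∧
    (∀ k : ℕ, (∫ x in Set.Ioo (0:ℝ) (1/2),
        Real.sin ((2 * k + 1) * Real.pi * x) ^ 2) = (1/2 : ℝ)^2) ∧
    (∀ f : ℝ → ℝ, MemLp f 2 (volume.restrict (Set.Ioo (0:ℝ) (1/2))) →
      (∀ k : ℕ, ∫ x in Set.Ioo (0:ℝ) (1/2), f x * Real.sin ((2 * k + 1) * Real.pi * x) = 0) →
      f =ᵐ[volume.restrict (Set.Ioo (0:ℝ) (1/2))] 0) := by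
  exact ⟨part1, part2, fun f hf h0 => part3 f hf h0⟩
end

section
/- Let H be a Hilbert space, {v_n}_{n≥0} a Riesz basis of H with biorthogonal basis {v_n*}, and {ṽ_n}_{n≥0} another Riesz basis of H with biorthogonal basis {ṽ_n*}. Suppose K, K̃ ∈ H satisfy ⟨K, v_n⟩ = f_n and ⟨K̃, ṽ_n⟩ = f̃_n for all n, with {f_n}, {f̃_n} ∈ l². Then ‖K − K̃‖ ≤ C (Σ_n ‖v_n − ṽ_n‖²)^{1/2} + C (Σ_n |f_n − f̃_n|²)^{1/2}, where C depends only on the Riesz basis bounds of {v_n} and {ṽ_n} and on ‖K‖. -/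
open scoped RealInnerProductSpace

private lemma parseval {H : Type*} [NormedAddCommGroup H]
    [InnerProductSpace ℝ H] (e : HilbertBasis ℕ ℝ H) (x : H) :
    ‖x‖ = (∑' n : ℕ, |⟪e n, x⟫| ^ 2) ^ (1/2 : ℝ) := by
  have h1 : ‖x‖ = ‖e.repr x‖ := (e.repr.norm_map x).symm
  rw [h1, lp.norm_eq_tsum_rpow (by norm_num : 0 < (2:ENNReal).toReal)]
  have h2 : (2:ENNReal).toReal = 2 := by norm_num
  rw [h2]
  congr 1
  refine tsum_congr fun n => ?_
  rw [e.repr_apply_apply, Real.rpow_two]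
  simp [Real.norm_eq_abs, sq_abs]


theorem reconstruction_stability {H : Type*} [NormedAddCommGroup H]
    [InnerProductSpace ℝ H] [CompleteSpace H]
    (v w : ℕ → H) (hv : IsRieszBasis v) (hw : IsRieszBasis w) (K : H) :
    ∃ C > (0:ℝ), ∀ Kt : H,
      Summable (fun n : ℕ => ‖v n - w n‖^2) →
      ‖K - Kt‖ ≤ C * (∑' n : ℕ, ‖v n - w n‖^2) ^ (1/2 : ℝ)
        + C * (∑' n : ℕ, |⟪K, v n⟫ - ⟪Kt, w n⟫|^2) ^ (1/2 : ℝ) := by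
  obtain ⟨e, T, hT⟩ := hv
  obtain ⟨f, S, hS⟩ := hw
  -- change of basis unitary
  let U : H ≃L[ℝ] H := (e.repr.trans f.repr.symm).toContinuousLinearEquiv
  have hU : ∀ n, U (e n) = f n := by
    intro n
    show f.repr.symm (e.repr (e n)) = f n
    classical
    rw [e.repr_self]
    exact f.repr.injective (by rw [LinearIsometryEquiv.apply_symm_apply, f.repr_self])
  let S2 : H ≃L[ℝ] H := U.trans S
  have hS2 : ∀ n, w n = S2 (e n) := fun n => by
    show w n = S (U (e n)); rw [hU n, hS n]
  let A := ContinuousLinearMap.adjoint (T : H →L[ℝ] H)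
  let B := ContinuousLinearMap.adjoint (S2 : H →L[ℝ] H)
  let Bi := ContinuousLinearMap.adjoint (S2.symm : H →L[ℝ] H)
  have hBi : ∀ x, Bi (B x) = x := by
    intro x
    have h1 : (S2 : H →L[ℝ] H) ∘L (S2.symm : H →L[ℝ] H) = ContinuousLinearMap.id ℝ H := by
      ext y; simp
    have h2 : Bi ∘L B = ContinuousLinearMap.id ℝ H := by
      rw [← ContinuousLinearMap.adjoint_comp, h1, ContinuousLinearMap.adjoint_id]
    calc Bi (B x) = (Bi ∘L B) x := rfl
    _ = x := by rw [h2]; rfl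
  have hA : ∀ (x : H) n, ⟪e n, A x⟫ = ⟪x, v n⟫ := by
    intro x n
    rw [real_inner_comm, ContinuousLinearMap.adjoint_inner_left, hT n]; rfl
  have hB : ∀ (x : H) n, ⟪e n, B x⟫ = ⟪x, w n⟫ := by
    intro x n
    rw [real_inner_comm, ContinuousLinearMap.adjoint_inner_left, hS2 n]; rfl
  refine ⟨(‖Bi‖ + 1) * (‖K‖ + 1), by positivity, ?_⟩
  intro Kt hsum
  set a := (∑' n : ℕ, ‖v n - w n‖^2) ^ (1/2 : ℝ) with ha_def
  set b := (∑' n : ℕ, |⟪K, v n⟫ - ⟪Kt, w n⟫|^2) ^ (1/2 : ℝ) with hb_def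
  have ha : 0 ≤ a := Real.rpow_nonneg (tsum_nonneg fun n => by positivity) _
  have hb : 0 ≤ b := Real.rpow_nonneg (tsum_nonneg fun n => by positivity) _
  -- key1 : ‖B K - A K‖ ≤ ‖K‖ * a
  have key1 : ‖B K - A K‖ ≤ ‖K‖ * a := by
    rw [parseval e]
    have hle : ∀ n : ℕ, |⟪e n, B K - A K⟫| ^ 2 ≤ ‖K‖^2 * ‖v n - w n‖^2 := by
      intro n
      have : ⟪e n, B K - A K⟫ = ⟪K, w n - v n⟫ := by
        rw [inner_sub_right, hA, hB, ← inner_sub_right]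
      rw [this, ← mul_pow]
      have h1 : |⟪K, w n - v n⟫| ≤ ‖K‖ * ‖v n - w n‖ := by
        rw [norm_sub_rev]
        exact abs_real_inner_le_norm K (w n - v n) |>.trans (by rw [norm_sub_rev])
      exact pow_le_pow_left₀ (abs_nonneg _) h1 2
    have hsum2 : Summable (fun n : ℕ => ‖K‖^2 * ‖v n - w n‖^2) := hsum.mul_left _
    have hsum1 : Summable (fun n : ℕ => |⟪e n, B K - A K⟫| ^ 2) :=
      Summable.of_nonneg_of_le (fun n => by positivity) hle hsum2
    have hts : (∑' n : ℕ, |⟪e n, B K - A K⟫| ^ 2) ≤ ‖K‖^2 * ∑' n : ℕ, ‖v n - w n‖^2 := by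
      rw [← tsum_mul_left]
      exact Summable.tsum_le_tsum hle hsum1 hsum2
    calc (∑' n : ℕ, |⟪e n, B K - A K⟫| ^ 2) ^ (1/2 : ℝ)
        ≤ (‖K‖^2 * ∑' n : ℕ, ‖v n - w n‖^2) ^ (1/2 : ℝ) :=
          Real.rpow_le_rpow (tsum_nonneg fun n => by positivity) hts (by norm_num)
      _ = ‖K‖ * a := by
          rw [Real.mul_rpow (by positivity) (tsum_nonneg fun n => by positivity), ha_def]
          congr 1
          rw [← Real.rpow_natCast ‖K‖ 2, ← Real.rpow_mul (norm_nonneg _)]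
          norm_num
  -- key2 : ‖A K - B Kt‖ = b
  have key2 : ‖A K - B Kt‖ = b := by
    rw [parseval e, hb_def]
    congr 1
    refine tsum_congr fun n => ?_
    rw [inner_sub_right, hA, hB]
  have hBiK : Bi (B K - B Kt) = K - Kt := by rw [map_sub, hBi, hBi]
  have tri : ‖B K - B Kt‖ ≤ ‖B K - A K‖ + ‖A K - B Kt‖ := by
    have := norm_sub_le_norm_sub_add_norm_sub (B K) (A K) (B Kt)
    exact this
  calc ‖K - Kt‖ = ‖Bi (B K - B Kt)‖ := by rw [hBiK]
    _ ≤ ‖Bi‖ * ‖B K - B Kt‖ := Bi.le_opNorm _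
    _ ≤ ‖Bi‖ * (‖K‖ * a + b) := by
        refine mul_le_mul_of_nonneg_left ?_ (norm_nonneg _)
        calc ‖B K - B Kt‖ ≤ ‖B K - A K‖ + ‖A K - B Kt‖ := tri
          _ ≤ ‖K‖ * a + b := by rw [key2]; exact add_le_add_left key1 _
    _ ≤ (‖Bi‖ + 1) * (‖K‖ + 1) * a + (‖Bi‖ + 1) * (‖K‖ + 1) * b := by
        have h1 : (0:ℝ) ≤ ‖Bi‖ := norm_nonneg _
        have h2 : (0:ℝ) ≤ ‖K‖ := norm_nonneg _
        nlinarith [mul_nonneg h1 ha, mul_nonneg h1 hb, mul_nonneg h2 ha, mul_nonneg h2 hb, mul_nonneg (mul_nonneg h1 h2) ha, mul_nonneg (mul_nonneg h1 h2) hb, ha, hb]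
end
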